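/- For a finitary endofunctor F on a locally finitely presentable category, any solution operator satisfying Weak Functoriality also satisfies (full) Functoriality: given fp-equations e : X → FX + A and f : Y → FY + A and a coalgebra homomorphism m : (X, e) → (Y, f) for the functor F(−) + A, one has e† = f† ∘ m. -/

import Mathlib

open CategoryTheory CategoryTheory.Limits Opposite

universe v u

variable {C : Type u} [Category.{v} C]

/-- An object is finitely presentable (fp) if its hom-functor preserves filtered colimits. -/
def IsFP (X : C) : Prop :=
  ∀ (J : Type v) (_ : SmallCategory J), IsFiltered J →
    Nonempty (PreservesColimitsOfShape J (coyoneda.obj (op X)))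

section CoprodConnected

variable [HasBinaryCoproducts C] {J : Type v} [SmallCategory J]

/-- Forget the `W ⨿ -` part of a cocone over `K ⋙ coprod.functor.obj W`. -/
@[simps]
noncomputable def forgetCocone {W : C} {K : J ⥤ C} (s : Cocone (K ⋙ coprod.functor.obj W)) : Cocone K where
  pt := s.pt
  ι := { app := fun j => coprod.inr ≫ s.ι.app j
         naturality := fun j j' g => by
           have := s.ι.naturality g
           dsimp at this ⊢
           simp only [Category.comp_id, coprod.functor_obj_map] at this ⊢
           erw [← this, coprod.inr_map_assoc] }

/-- The constant natural transformation picking out the `inl` components of a cocone. -/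
@[simps]
noncomputable def inlTrans {W : C} {K : J ⥤ C} (s : Cocone (K ⋙ coprod.functor.obj W)) :
    (Functor.const J).obj W ⟶ (Functor.const J).obj s.pt where
  app := fun j => coprod.inl ≫ s.ι.app j
  naturality := fun j j' g => by
    have := s.ι.naturality g
    dsimp at this ⊢
    simp only [Category.comp_id, Category.id_comp, coprod.functor_obj_map] at this ⊢
    erw [← this, coprod.inl_map_assoc, Category.id_comp]

lemma coprod_map_swap' {W X Y Z : C} (f : W ⟶ X) (g : Y ⟶ Z) :
    coprod.map f (𝟙 Y) ≫ coprod.map (𝟙 X) g = coprod.map (𝟙 W) g ≫ coprod.map f (𝟙 Z) := by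
  simp [coprod.map_map]

/-- The functor `W ⨿ -` preserves connected colimits. -/
lemma coprod_preservesConnectedColimits [IsConnected J] (W : C) :
    PreservesColimitsOfShape J (coprod.functor.obj W) where
  preservesColimit {K} :=
    { preserves := fun {c} l => ⟨{
        desc := fun s =>
          coprod.desc (coprod.inl ≫ s.ι.app (Classical.arbitrary _)) (l.desc (forgetCocone s))
        fac := fun s j => by
          dsimp
          simp only [coprod.functor_obj_map]
          apply coprod.hom_ext
          · erw [coprod.inl_map_assoc, Category.id_comp, coprod.inl_desc]
            have := nat_trans_from_is_connected (inlTrans s) (Classical.arbitrary _) j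
            simp only [inlTrans_app] at this
            exact this
          · erw [coprod.inr_map_assoc, coprod.inr_desc]
            exact l.fac (forgetCocone s) j
        uniq := fun s m hm => by
          apply coprod.hom_ext
          · erw [coprod.inl_desc]
            rw [← hm (Classical.arbitrary J)]
            dsimp
            simp only [coprod.functor_obj_map]
            erw [coprod.inl_map_assoc, Category.id_comp]
          · erw [coprod.inr_desc]
            apply l.uniq (forgetCocone s)
            intro j
            have h := hm j
            dsimp at h ⊢
            erw [forgetCocone_ι_app, ← h, coprod.inr_map_assoc]
            rfl }⟩ }

end CoprodConnected

/-- For a finitary endofunctor on a locally finitely presentable category, a solution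
operator satisfying Weak Functoriality also satisfies full Functoriality. -/
theorem weakFunctoriality_implies_functoriality
    [HasBinaryCoproducts C] [HasColimitsOfSize.{v, v} C]
    (F : C ⥤ C) [PreservesFilteredColimits F]
    -- C is locally finitely presentable: every object is a filtered colimit of fp objects
    (hlfp : ∀ A : C, ∃ (J : Type v) (_ : SmallCategory J) (_ : IsFiltered J)
      (D : J ⥤ C) (K : Cocone D), Nonempty (IsColimit K) ∧ K.pt = A ∧
        ∀ j, IsFP (D.obj j))
    -- a solution operator assigning to each fp-equation a morphism
    (sol : ∀ ⦃X A : C⦄, IsFP X → (X ⟶ F.obj X ⨿ A) → (X ⟶ A))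
    -- Weak Functoriality
    (hweak : ∀ {X Y Z A : C} (hX : IsFP X) (hY : IsFP Y), IsFP Z →
      ∀ (e : X ⟶ F.obj X ⨿ Z) (f : Y ⟶ F.obj Y ⨿ Z) (m : X ⟶ Y),
        e ≫ coprod.map (F.map m) (𝟙 Z) = m ≫ f →
        ∀ h : Z ⟶ A,
          sol hX (e ≫ coprod.map (𝟙 (F.obj X)) h) =
            m ≫ sol hY (f ≫ coprod.map (𝟙 (F.obj Y)) h)) :
    -- Functoriality
    ∀ {X Y A : C} (hX : IsFP X) (hY : IsFP Y)
      (e : X ⟶ F.obj X ⨿ A) (f : Y ⟶ F.obj Y ⨿ A) (m : X ⟶ Y),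
      e ≫ coprod.map (F.map m) (𝟙 A) = m ≫ f →
      sol hX e = m ≫ sol hY f := by
  intro X Y A hX hY e f m hm
  obtain ⟨J, instJ, instFil, D, K, ⟨hK⟩, hpt, hfp⟩ := hlfp A
  subst hpt
  have : IsConnected J := IsFiltered.isConnected J
  -- the coproduct cocones are colimits
  haveI := coprod_preservesConnectedColimits (J := J) (F.obj Y)
  haveI := coprod_preservesConnectedColimits (J := J) (F.obj X)
  have LY : IsColimit ((coprod.functor.obj (F.obj Y)).mapCocone K) :=
    isColimitOfPreserves (coprod.functor.obj (F.obj Y)) hK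
  have LX : IsColimit ((coprod.functor.obj (F.obj X)).mapCocone K) :=
    isColimitOfPreserves (coprod.functor.obj (F.obj X)) hK
  -- hom-functors of fp objects preserve these colimits
  haveI pX := (hX J instJ instFil).some
  haveI pY := (hY J instJ instFil).some
  have TXY : IsColimit ((coyoneda.obj (op X)).mapCocone
      ((coprod.functor.obj (F.obj Y)).mapCocone K)) :=
    isColimitOfPreserves (coyoneda.obj (op X)) LY
  have TXX : IsColimit ((coyoneda.obj (op X)).mapCocone
      ((coprod.functor.obj (F.obj X)).mapCocone K)) :=
    isColimitOfPreserves (coyoneda.obj (op X)) LX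
  have TYY : IsColimit ((coyoneda.obj (op Y)).mapCocone
      ((coprod.functor.obj (F.obj Y)).mapCocone K)) :=
    isColimitOfPreserves (coyoneda.obj (op Y)) LY
  -- factor f through a stage j₀
  obtain ⟨j₀, f₀, hf₀⟩ := Types.jointly_surjective _ TYY f
  -- factor e through a stage j₁
  obtain ⟨j₁, e₀, he₀⟩ := Types.jointly_surjective _ TXX e
  -- hf₀ : f₀ ≫ coprod.map (𝟙 _) (K.ι.app j₀) = f, similarly for e₀
  dsimp at hf₀ he₀
  -- the two morphisms X ⟶ F.obj Y ⨿ D _ become equal in the colimit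
  have key : ((coyoneda.obj (op X)).mapCocone
        ((coprod.functor.obj (F.obj Y)).mapCocone K)).ι.app j₁
        (e₀ ≫ coprod.map (F.map m) (𝟙 (D.obj j₁))) =
      ((coyoneda.obj (op X)).mapCocone
        ((coprod.functor.obj (F.obj Y)).mapCocone K)).ι.app j₀ (m ≫ f₀) := by
    dsimp
    erw [Category.assoc, coprod_map_swap', ← Category.assoc, he₀, hm,
      Category.assoc, hf₀]
    rfl
  rw [Types.FilteredColimit.isColimit_eq_iff _ TXY] at key
  obtain ⟨k, g₁, g₀, hk⟩ := key
  dsimp at hk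
  -- move both equations to stage k
  set e₁ : X ⟶ F.obj X ⨿ D.obj k := e₀ ≫ coprod.map (𝟙 _) (D.map g₁) with he₁
  set f₁ : Y ⟶ F.obj Y ⨿ D.obj k := f₀ ≫ coprod.map (𝟙 _) (D.map g₀) with hf₁
  have hcoalg : e₁ ≫ coprod.map (F.map m) (𝟙 (D.obj k)) = m ≫ f₁ := by
    erw [he₁, hf₁, Category.assoc, ← coprod_map_swap', ← Category.assoc, ← Category.assoc]
    exact hk
  have he : e₁ ≫ coprod.map (𝟙 (F.obj X)) (K.ι.app k) = e := by
    erw [he₁, Category.assoc, coprod.map_map, Category.id_comp, K.w g₁]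
    exact he₀
  have hf : f₁ ≫ coprod.map (𝟙 (F.obj Y)) (K.ι.app k) = f := by
    erw [hf₁, Category.assoc, coprod.map_map, Category.id_comp, K.w g₀]
    exact hf₀
  have := hweak hX hY (hfp k) e₁ f₁ m hcoalg (K.ι.app k)
  rw [he, hf] at this
  exact this
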